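/- Let Φγ be the MAD channel with decay rates γ satisfying γ i j ≥ 0 for i < j and ∑_{i<j} γ i j ≤ 1 for each j. Assume 1 + n2(γ) < n1(γ) and that every level j with j < d − 1 that is not totally depleted receives a decay contribution from at most one higher level, i.e. the number of k > j with γ j k ≠ 0 is at most 1. Then rank Φγ(e eᴴ) = 1 + n2(γ), where e : Fin d → ℂ is the all-ones vector and e eᴴ = Matrix.vecMulVec e (star e). -/

import Mathlib

open Matrix

/-- The Kraus operator `A₀` of the multi-level amplitude damping channel. -/
noncomputable def madA0 {d : ℕ} (γ : Fin d → Fin d → ℝ) : Matrix (Fin d) (Fin d) ℂ :=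
  Matrix.diagonal fun j => (Real.sqrt (1 - ∑ i ∈ Finset.Iio j, γ i j) : ℂ)

/-- The multi-level amplitude damping (MAD) channel with decay rates `γ`. -/
noncomputable def madChannel {d : ℕ} (γ : Fin d → Fin d → ℝ)
    (X : Matrix (Fin d) (Fin d) ℂ) : Matrix (Fin d) (Fin d) ℂ :=
  madA0 γ * X * (madA0 γ)ᴴ + ∑ j, ∑ i ∈ Finset.Iio j, (γ i j : ℂ) •
    (Matrix.single i j 1 * X * Matrix.single j i 1)

/-- A level `j` is totally depleted if no higher level decays into it and the total decay
rate out of it is one. -/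
def totallyDepleted {d : ℕ} (γ : Fin d → Fin d → ℝ) (j : Fin d) : Prop :=
  (∑ i ∈ Finset.Iio j, γ i j = 1) ∧ ∀ k, j < k → γ j k = 0

/-- The number of levels that are not totally depleted. -/
noncomputable def madN1 {d : ℕ} (γ : Fin d → Fin d → ℝ) : ℕ :=
  Nat.card {j : Fin d // ¬ totallyDepleted γ j}

/-- The number of nonzero decay rates. -/
noncomputable def madN2 {d : ℕ} (γ : Fin d → Fin d → ℝ) : ℕ :=
  Nat.card {p : Fin d × Fin d // p.1 < p.2 ∧ γ p.1 p.2 ≠ 0}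

lemma madChannel_one {d : ℕ} (γ : Fin d → Fin d → ℝ) :
    madChannel γ (vecMulVec (fun _ => 1) (star fun _ => (1:ℂ))) =
      Matrix.of (fun p q => ((Real.sqrt (1 - ∑ i ∈ Finset.Iio p, γ i p) : ℝ) : ℂ) *
          ((Real.sqrt (1 - ∑ i ∈ Finset.Iio q, γ i q) : ℝ) : ℂ)) +
        Matrix.diagonal (fun p => ((∑ k ∈ Finset.Ioi p, γ p k : ℝ) : ℂ)) := by
  ext p q
  rw [madChannel, Matrix.add_apply, Matrix.add_apply]
  congr 1
  · simp [madA0, Matrix.mul_apply, Matrix.diagonal_apply, Matrix.conjTranspose_apply,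
      vecMulVec_apply, ite_mul, zero_mul, Finset.sum_ite_eq', mul_ite, mul_zero,
      Complex.star_def, Complex.conj_ofReal]
  · simp only [Matrix.sum_apply, Matrix.smul_apply, Matrix.mul_apply, Matrix.single,
      vecMulVec_apply, Pi.star_apply, star_one, one_mul, mul_one, Matrix.of_apply]
    simp only [ite_and, ite_mul, mul_ite, one_mul, mul_one, zero_mul, mul_zero, Finset.sum_ite_eq,
      Finset.sum_ite_eq', Finset.mem_univ, if_true, smul_ite, smul_zero, smul_eq_mul]
    rcases eq_or_ne q p with rfl | hpq
    · simp only [if_pos rfl, Finset.sum_ite_eq, Finset.mem_univ, if_true, mul_one,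
        Matrix.diagonal_apply_eq, Finset.mem_Iio]
      push_cast
      rw [← Finset.sum_filter]
      congr 1
      ext x
      simp
    · simp [hpq, Matrix.diagonal_apply_ne' _ hpq]

lemma rank_aux {d : ℕ} (a D : Fin d → ℂ) (j0 : Fin d) (ha : a j0 ≠ 0) (hD : D j0 = 0) :
    (Matrix.of (fun p q => a p * a q) + Matrix.diagonal D).rank
      = Nat.card {j : Fin d // D j ≠ 0} + 1 := by
  classical
  set M : Matrix (Fin d) (Fin d) ℂ := Matrix.of (fun p q => a p * a q) + Matrix.diagonal D with hM
  set e : Fin d → (Fin d → ℂ) := fun j => Pi.single j 1 with he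
  set b : Option {j : Fin d // D j ≠ 0} → (Fin d → ℂ) :=
    fun o => Option.casesOn' o a (fun j => e (j : Fin d)) with hb
  have hmv : ∀ v : Fin d → ℂ, M.mulVec v = (∑ q, a q * v q) • a + fun p => D p * v p := by
    intro v; funext p
    simp only [hM, Matrix.mulVec, dotProduct, Matrix.add_apply, Matrix.of_apply,
      Matrix.diagonal_apply, add_mul, ite_mul, zero_mul, Finset.sum_add_distrib,
      Finset.sum_ite_eq, Finset.mem_univ, if_true, Pi.add_apply, Pi.smul_apply, smul_eq_mul]
    have : ∑ q, a p * a q * v q = a p * ∑ q, a q * v q := by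
      rw [Finset.mul_sum]; exact Finset.sum_congr rfl fun _ _ => by ring
    rw [this]; ring
  have hcol : ∀ j, M.mulVec (e j) = a j • a + D j • e j := by
    intro j
    rw [hmv]
    congr 1
    · congr 1
      simp [he, Pi.single_apply, mul_ite, Finset.sum_ite_eq']
    · funext p
      rcases eq_or_ne p j with rfl | hpj
      · simp [he]
      · simp [he, Pi.single_eq_of_ne hpj]
  have hmem_a : a ∈ LinearMap.range M.mulVecLin := by
    refine ⟨(a j0)⁻¹ • e j0, ?_⟩
    rw [LinearMap.map_smul, Matrix.mulVecLin_apply, hcol, hD, zero_smul, add_zero, smul_smul,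
      inv_mul_cancel₀ ha, one_smul]
  have hrange : LinearMap.range M.mulVecLin = Submodule.span ℂ (Set.range b) := by
    apply le_antisymm
    · rintro _ ⟨v, rfl⟩
      rw [Matrix.mulVecLin_apply, hmv v]
      apply Submodule.add_mem
      · exact Submodule.smul_mem _ _ (Submodule.subset_span ⟨none, rfl⟩)
      · have hfs : (fun p => D p * v p) = ∑ j : Fin d, (D j * v j) • e j := by
          funext p
          rw [Finset.sum_apply]
          simp [he, Pi.single_apply, Finset.sum_ite_eq']
        rw [hfs]
        refine Submodule.sum_mem _ fun j _ => ?_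
        by_cases hj : D j = 0
        · rw [hj, zero_mul, zero_smul]; exact zero_mem _
        · exact Submodule.smul_mem _ _ (Submodule.subset_span ⟨some ⟨j, hj⟩, rfl⟩)
    · rw [Submodule.span_le]
      rintro _ ⟨o, rfl⟩
      cases o with
      | none => exact hmem_a
      | some j =>
        have hEq : e (j : Fin d) = (D j)⁻¹ • (M.mulVec (e (j : Fin d)) - a j • a) := by
          rw [hcol, add_sub_cancel_left, smul_smul, inv_mul_cancel₀ j.2, one_smul]
        show e (j : Fin d) ∈ _
        rw [hEq]
        exact Submodule.smul_mem _ _ (Submodule.sub_mem _ ⟨_, rfl⟩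
          (Submodule.smul_mem _ _ hmem_a))
  have hvli : LinearIndependent ℂ (fun j : {j : Fin d // D j ≠ 0} => e (j : Fin d)) := by
    have h1 := (Pi.basisFun ℂ (Fin d)).linearIndependent
    have h2 := h1.comp (Subtype.val : {j : Fin d // D j ≠ 0} → Fin d) Subtype.val_injective
    have h3 : (fun j : {j : Fin d // D j ≠ 0} => e (j : Fin d)) =
        ⇑(Pi.basisFun ℂ (Fin d)) ∘ Subtype.val := by
      funext j; simp [he]
    rwa [h3]
  have hnotmem : a ∉ Submodule.span ℂ
      (Set.range fun j : {j : Fin d // D j ≠ 0} => e (j : Fin d)) := by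
    intro hmem
    have hle : Submodule.span ℂ
        (Set.range fun j : {j : Fin d // D j ≠ 0} => e (j : Fin d)) ≤
        LinearMap.ker (LinearMap.proj j0 : (Fin d → ℂ) →ₗ[ℂ] ℂ) := by
      rw [Submodule.span_le]
      rintro _ ⟨j, rfl⟩
      have hj : (j : Fin d) ≠ j0 := fun h => j.2 (h ▸ hD)
      simp [he, LinearMap.mem_ker, Pi.single_eq_of_ne' hj]
    exact ha (hle hmem)
  have hbli : LinearIndependent ℂ b := hvli.option hnotmem
  rw [Matrix.rank, hrange, finrank_span_eq_card hbli, Fintype.card_option,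
    Nat.card_eq_fintype_card]

lemma count_aux {d : ℕ} (γ : Fin d → Fin d → ℝ)
    (hγ : ∀ i j : Fin d, i < j → 0 ≤ γ i j)
    (hrecv : ∀ j : Fin d, (j : ℕ) < d - 1 → ¬ totallyDepleted γ j →
      Nat.card {k : Fin d // j < k ∧ γ j k ≠ 0} ≤ 1) :
    Nat.card {j : Fin d // (∑ k ∈ Finset.Ioi j, γ j k) ≠ 0} = madN2 γ := by
  classical
  rw [madN2]
  refine (Nat.card_eq_of_bijective
    (fun p : {p : Fin d × Fin d // p.1 < p.2 ∧ γ p.1 p.2 ≠ 0} =>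
      (⟨p.1.1, ?_⟩ : {j : Fin d // (∑ k ∈ Finset.Ioi j, γ j k) ≠ 0})) ⟨?_, ?_⟩).symm
  · have h1 : γ p.1.1 p.1.2 ≤ ∑ k ∈ Finset.Ioi p.1.1, γ p.1.1 k :=
      Finset.single_le_sum (fun k hk => hγ _ k (Finset.mem_Ioi.mp hk))
        (Finset.mem_Ioi.mpr p.2.1)
    have h2 : 0 < γ p.1.1 p.1.2 := lt_of_le_of_ne (hγ _ _ p.2.1) (Ne.symm p.2.2)
    exact ne_of_gt (lt_of_lt_of_le h2 h1)
  · rintro ⟨⟨i1, k1⟩, h1, h1'⟩ ⟨⟨i2, k2⟩, h2, h2'⟩ heq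
    simp only [Subtype.mk.injEq] at heq
    subst heq
    have hd1 : (i1 : ℕ) < d - 1 := by
      have hA : (i1 : ℕ) < (k1 : ℕ) := h1
      have hB : (k1 : ℕ) < d := k1.isLt
      omega
    have hTD : ¬ totallyDepleted γ i1 := fun td => h1' (td.2 k1 h1)
    have hle := hrecv i1 hd1 hTD
    rw [Nat.card_eq_fintype_card] at hle
    have hsub : Subsingleton {k : Fin d // i1 < k ∧ γ i1 k ≠ 0} :=
      Fintype.card_le_one_iff_subsingleton.mp hle
    have : (⟨k1, h1, h1'⟩ : {k : Fin d // i1 < k ∧ γ i1 k ≠ 0}) = ⟨k2, h2, h2'⟩ :=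
      Subsingleton.elim _ _
    simp only [Subtype.mk.injEq] at this
    simp [this]
  · rintro ⟨j, hj⟩
    have : ∃ k ∈ Finset.Ioi j, γ j k ≠ 0 := by
      by_contra h
      push_neg at h
      exact hj (Finset.sum_eq_zero h)
    obtain ⟨k, hk, hk'⟩ := this
    exact ⟨⟨(j, k), Finset.mem_Ioi.mp hk, hk'⟩, rfl⟩

theorem stmt8 {d : ℕ} (hd : 1 ≤ d) (γ : Fin d → Fin d → ℝ)
    (hγ : ∀ i j : Fin d, i < j → 0 ≤ γ i j)
    (hγsum : ∀ j : Fin d, ∑ i ∈ Finset.Iio j, γ i j ≤ 1)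
    (hn : 1 + madN2 γ < madN1 γ)
    (hrecv : ∀ j : Fin d, (j : ℕ) < d - 1 → ¬ totallyDepleted γ j →
      Nat.card {k : Fin d // j < k ∧ γ j k ≠ 0} ≤ 1) :
    (madChannel γ (vecMulVec (fun _ => 1) (star fun _ => (1 : ℂ)))).rank = 1 + madN2 γ := by
  classical
  rw [madChannel_one γ]
  have hDzero : ∀ j : Fin d, (∑ k ∈ Finset.Ioi j, γ j k) = 0 ↔ ∀ k, j < k → γ j k = 0 := by
    intro j
    constructor
    · intro h k hk
      exact (Finset.sum_eq_zero_iff_of_nonneg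
        (fun k hk' => hγ j k (Finset.mem_Ioi.mp hk'))).mp h k (Finset.mem_Ioi.mpr hk)
    · intro h; exact Finset.sum_eq_zero fun k hk => h k (Finset.mem_Ioi.mp hk)
  have hsqrt : ∀ j : Fin d, Real.sqrt (1 - ∑ i ∈ Finset.Iio j, γ i j) = 0 ↔
      (∑ i ∈ Finset.Iio j, γ i j) = 1 := by
    intro j
    rw [Real.sqrt_eq_zero']
    constructor
    · intro h; linarith [hγsum j]
    · intro h; rw [h]; simp
  have hTD : ∀ j : Fin d, totallyDepleted γ j ↔
      (Real.sqrt (1 - ∑ i ∈ Finset.Iio j, γ i j) = 0 ∧ (∑ k ∈ Finset.Ioi j, γ j k) = 0) := by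
    intro j
    rw [totallyDepleted, hDzero, hsqrt, and_comm]
  have hcard := count_aux γ hγ hrecv
  have hex : ∃ j0 : Fin d, Real.sqrt (1 - ∑ i ∈ Finset.Iio j0, γ i j0) ≠ 0 ∧
      (∑ k ∈ Finset.Ioi j0, γ j0 k) = 0 := by
    by_contra hno
    push_neg at hno
    have hsubset : {j : Fin d | ¬ totallyDepleted γ j} ⊆
        {j : Fin d | (∑ k ∈ Finset.Ioi j, γ j k) ≠ 0} := by
      intro j hj
      by_contra hDj
      simp only [Set.mem_setOf_eq, not_not] at hDj
      have hs : Real.sqrt (1 - ∑ i ∈ Finset.Iio j, γ i j) ≠ 0 := by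
        intro h0
        exact hj ((hTD j).mpr ⟨h0, hDj⟩)
      exact hno j hs hDj
    have hle : madN1 γ ≤ madN2 γ := by
      have h1 : Nat.card {j : Fin d // ¬ totallyDepleted γ j} =
          Set.ncard {j : Fin d | ¬ totallyDepleted γ j} := Nat.card_coe_set_eq _
      have h2 : Nat.card {j : Fin d // (∑ k ∈ Finset.Ioi j, γ j k) ≠ 0} =
          Set.ncard {j : Fin d | (∑ k ∈ Finset.Ioi j, γ j k) ≠ 0} := Nat.card_coe_set_eq _
      rw [madN1, ← hcard, h1, h2]
      exact Set.ncard_le_ncard hsubset (Set.toFinite _)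
    omega
  obtain ⟨j0, hj0a, hj0D⟩ := hex
  rw [rank_aux _ _ j0 (by exact_mod_cast hj0a) (by exact_mod_cast hj0D)]
  have hcoe : Nat.card {j : Fin d // ((∑ k ∈ Finset.Ioi j, γ j k : ℝ) : ℂ) ≠ 0} =
      Nat.card {j : Fin d // (∑ k ∈ Finset.Ioi j, γ j k) ≠ 0} :=
    Nat.card_congr (Equiv.subtypeEquivRight (fun j => by
      simp only [Ne, Complex.ofReal_eq_zero]))
  rw [hcoe, hcard, Nat.add_comm]
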